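/- Let Ω, λ, u, α, θ₀, h, Γ_h^−, Γ_h^+, ν⁻, ν⁺ be as in the context, and let n ≥ 3 be an integer. Suppose Γ_h^+ is a singular line of u, i.e., ∇u(x)·ν⁺ = 0 for all x ∈ Γ_h^+, and Γ_h^− is a generalized singular line of u with constant parameter C₁ ∈ ℂ, C₁ ≠ 0, i.e., ∇u(x)·ν⁻ + C₁·u(x) = 0 for all x ∈ Γ_h^−. If u(0) = 0 and α ≠ q/p for all integers p, q with 1 ≤ p ≤ n−1 and 1 ≤ q ≤ p−1, then u vanishes at 0 up to order n, i.e., every partial derivative of u of order strictly less than n vanishes at 0. -/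

import Mathlib

/-- First partial derivative of `u : ℝ × ℝ → ℂ` in the `x₁` direction. -/
noncomputable def pd1 (u : ℝ × ℝ → ℂ) : ℝ × ℝ → ℂ := fun x => fderiv ℝ u x (1, 0)

/-- First partial derivative of `u : ℝ × ℝ → ℂ` in the `x₂` direction. -/
noncomputable def pd2 (u : ℝ × ℝ → ℂ) : ℝ × ℝ → ℂ := fun x => fderiv ℝ u x (0, 1)

open Filter Topology Finset

namespace Stmt7Aux

noncomputable def dd (v : ℝ × ℝ) (g : ℝ × ℝ → ℂ) : ℝ × ℝ → ℂ := fun x => fderiv ℝ g x v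

def e1 : ℝ × ℝ := (1, 0)
def e2 : ℝ × ℝ := (0, 1)

variable {B : Set (ℝ × ℝ)} {g f f3 : ℝ × ℝ → ℂ} {v w e : ℝ × ℝ} {x : ℝ × ℝ}

lemma an_dd (hg : AnalyticOnNhd ℝ g B) : AnalyticOnNhd ℝ (dd v g) B :=
  (ContinuousLinearMap.apply ℝ ℂ v).comp_analyticOnNhd hg.fderiv

lemma an_dd_iter (hg : AnalyticOnNhd ℝ g B) (k : ℕ) :
    AnalyticOnNhd ℝ ((dd v)^[k] g) B := by
  induction k with
  | zero => exact hg
  | succ k ih => rw [Function.iterate_succ_apply']; exact an_dd ih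

lemma dd_congr (hB : IsOpen B) (hfg : ∀ y ∈ B, f y = g y) (hx : x ∈ B) :
    dd v f x = dd v g x := by
  have : f =ᶠ[𝓝 x] g := Filter.eventuallyEq_of_mem (hB.mem_nhds hx) hfg
  simp only [dd, this.fderiv_eq]

lemma dd_iter_congr (hB : IsOpen B) (hfg : ∀ y ∈ B, f y = g y) (k : ℕ) :
    ∀ x ∈ B, (dd v)^[k] f x = (dd v)^[k] g x := by
  induction k with
  | zero => exact hfg
  | succ k ih =>
    intro x hx
    rw [Function.iterate_succ_apply', Function.iterate_succ_apply']
    exact dd_congr hB ih hx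

lemma dd_dd (hg : AnalyticOnNhd ℝ g B) (hx : x ∈ B) :
    dd v (dd w g) x = fderiv ℝ (fderiv ℝ g) x v w := by
  have h1 : DifferentiableAt ℝ (fderiv ℝ g) x := (hg.fderiv x hx).differentiableAt
  have h2 : dd w g = fun y => (fderiv ℝ g y) w := rfl
  have := fderiv_clm_apply h1 (differentiableAt_const w)
  simp only [dd, h2, this]
  simp

lemma dd_swap (hg : AnalyticOnNhd ℝ g B) (hx : x ∈ B) :
    dd v (dd w g) x = dd w (dd v g) x := by
  rw [dd_dd hg hx, dd_dd hg hx]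
  have hsym : IsSymmSndFDerivAt ℝ g x :=
    ((hg x hx).contDiffAt (n := 2)).isSymmSndFDerivAt (by norm_num)
  exact hsym v w

lemma dd_comm_iter (hB : IsOpen B) (hg : AnalyticOnNhd ℝ g B) (k : ℕ) :
    ∀ x ∈ B, dd w ((dd v)^[k] g) x = (dd v)^[k] (dd w g) x := by
  induction k with
  | zero => intro x _; rfl
  | succ k ih =>
    intro x hx
    rw [Function.iterate_succ_apply', Function.iterate_succ_apply']
    rw [dd_swap (an_dd_iter hg k) hx]
    exact dd_congr hB ih hx

lemma dd_add (hf : DifferentiableAt ℝ f x) (hg : DifferentiableAt ℝ g x) :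
    dd v (fun y => f y + g y) x = dd v f x + dd v g x := by
  simp only [dd, fderiv_fun_add hf hg]; rfl

lemma dd_const_mul (hf : DifferentiableAt ℝ f x) (c : ℂ) :
    dd v (fun y => c * f y) x = c * dd v f x := by
  simp only [dd, fderiv_const_mul hf c]; rfl

lemma dd_zero_fun : dd v (fun _ => (0:ℂ)) = fun _ => (0:ℂ) := by
  funext x; simp only [dd, fderiv_fun_const]; rfl

lemma dd_iter_zero (k : ℕ) : (dd v)^[k] (fun _ => (0:ℂ)) = fun _ => (0:ℂ) :=
  Function.iterate_fixed dd_zero_fun k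

lemma dd_dir (a b : ℝ) (v w : ℝ × ℝ) (g : ℝ × ℝ → ℂ) (x : ℝ × ℝ) :
    dd (a • v + b • w) g x = (a:ℂ) * dd v g x + (b:ℂ) * dd w g x := by
  simp only [dd, map_add, map_smul, smul_eq_mul, Complex.real_smul]

lemma dd_iter_lin (hB : IsOpen B) (hf : AnalyticOnNhd ℝ f B) (hg : AnalyticOnNhd ℝ g B)
    (a b : ℂ) (k : ℕ) :
    ∀ x ∈ B, (dd v)^[k] (fun y => a * f y + b * g y) x
      = a * (dd v)^[k] f x + b * (dd v)^[k] g x := by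
  induction k with
  | zero => intro x _; rfl
  | succ k ih =>
    intro x hx
    rw [Function.iterate_succ_apply', Function.iterate_succ_apply',
      Function.iterate_succ_apply']
    rw [dd_congr hB ih hx]
    have h1 : DifferentiableAt ℝ (fun y => a * (dd v)^[k] f y) x :=
      ((an_dd_iter hf k x hx).differentiableAt).const_mul a
    have h2 : DifferentiableAt ℝ (fun y => b * (dd v)^[k] g y) x :=
      ((an_dd_iter hg k x hx).differentiableAt).const_mul b
    rw [dd_add h1 h2, dd_const_mul ((an_dd_iter hf k x hx).differentiableAt) a,
      dd_const_mul ((an_dd_iter hg k x hx).differentiableAt) b]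

lemma dd_iter_lin3 (hB : IsOpen B) (hf : AnalyticOnNhd ℝ f B) (hg : AnalyticOnNhd ℝ g B)
    (hf3 : AnalyticOnNhd ℝ f3 B) (a b c3 : ℂ) (k : ℕ) :
    ∀ x ∈ B, (dd v)^[k] (fun y => a * f y + b * g y + c3 * f3 y) x
      = a * (dd v)^[k] f x + b * (dd v)^[k] g x + c3 * (dd v)^[k] f3 x := by
  have h1 : ∀ y ∈ B, (fun y => a * f y + b * g y + c3 * f3 y) y
      = (fun y => (1:ℂ) * (a * f y + b * g y) + c3 * f3 y) y := by intro y _; simp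
  have han : AnalyticOnNhd ℝ (fun y => a * f y + b * g y) B :=
    (analyticOnNhd_const.mul hf).add (analyticOnNhd_const.mul hg)
  intro x hx
  rw [dd_iter_congr hB h1 k x hx,
    dd_iter_lin hB han hf3 1 c3 k x hx,
    dd_iter_lin hB hf hg a b k x hx]
  ring

lemma dd_sum {ι : Type*} (s : Finset ι) (F : ι → ℝ × ℝ → ℂ) (c : ι → ℂ)
    (hF : ∀ k ∈ s, DifferentiableAt ℝ (F k) x) :
    dd v (fun y => ∑ k ∈ s, c k * F k y) x = ∑ k ∈ s, c k * dd v (F k) x := by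
  have : fderiv ℝ (fun y => ∑ k ∈ s, c k * F k y) x
      = ∑ k ∈ s, fderiv ℝ (fun y => c k * F k y) x :=
    fderiv_fun_sum (fun k hk => (hF k hk).const_mul (c k))
  simp only [dd, this, ContinuousLinearMap.sum_apply]
  exact Finset.sum_congr rfl fun k hk => by
    rw [fderiv_const_mul (hF k hk) (c k)]; rfl

noncomputable def Q (i j : ℕ) (g : ℝ × ℝ → ℂ) : ℝ × ℝ → ℂ := (dd e1)^[i] ((dd e2)^[j] g)

lemma an_Q (hg : AnalyticOnNhd ℝ g B) (i j : ℕ) : AnalyticOnNhd ℝ (Q i j g) B :=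
  an_dd_iter (an_dd_iter hg j) i

lemma dd1_Q (i j : ℕ) (g : ℝ × ℝ → ℂ) (x : ℝ × ℝ) :
    dd e1 (Q i j g) x = Q (i+1) j g x := by
  rw [Q, Q, Function.iterate_succ_apply']

lemma dd2_Q (hB : IsOpen B) (hg : AnalyticOnNhd ℝ g B) (i j : ℕ) (hx : x ∈ B) :
    dd e2 (Q i j g) x = Q i (j+1) g x := by
  rw [Q, dd_comm_iter hB (an_dd_iter hg j) i x hx, Q]
  rw [← Function.iterate_succ_apply' (dd e2) j g]

/-- move an inner `dd e1` to the outside through the `e2`-iterates -/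
lemma Q_dd1 (hB : IsOpen B) (hg : AnalyticOnNhd ℝ g B) (i j : ℕ) :
    ∀ x ∈ B, Q i j (dd e1 g) x = Q (i+1) j g x := by
  intro x hx
  have h1 : ∀ y ∈ B, (dd e2)^[j] (dd e1 g) y = dd e1 ((dd e2)^[j] g) y :=
    fun y hy => (dd_comm_iter hB hg j y hy).symm
  rw [Q, dd_iter_congr hB h1 i x hx]
  rw [← Function.iterate_succ_apply (dd e1) i ((dd e2)^[j] g)]
  rfl

lemma Q_dd2 (i j : ℕ) (g : ℝ × ℝ → ℂ) (x : ℝ × ℝ) :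
    Q i j (dd e2 g) x = Q i (j+1) g x := by
  rw [Q, ← Function.iterate_succ_apply (dd e2) j g]; rfl

lemma line_dir (θ : ℝ) : ((Real.cos θ, Real.sin θ) : ℝ × ℝ) = Real.cos θ • e1 + Real.sin θ • e2 := by
  simp [e1, e2, Prod.ext_iff]

lemma dd_line (θ : ℝ) (g : ℝ × ℝ → ℂ) (x : ℝ × ℝ) :
    dd (Real.cos θ, Real.sin θ) g x
      = (Real.cos θ : ℂ) * dd e1 g x + (Real.sin θ : ℂ) * dd e2 g x := by
  rw [line_dir, dd_dir]

lemma dd_iter_binom (hB : IsOpen B) (hg : AnalyticOnNhd ℝ g B) (θ : ℝ) :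
    ∀ (m : ℕ), ∀ x ∈ B, (dd (Real.cos θ, Real.sin θ))^[m] g x
      = ∑ k ∈ Finset.range (m+1),
          ((m.choose k : ℂ) * (Real.cos θ : ℂ)^(m-k) * (Real.sin θ : ℂ)^k) * Q (m-k) k g x := by
  intro m
  induction m with
  | zero => intro x _; simp [Q]
  | succ m ih =>
    intro x hx
    rw [Function.iterate_succ_apply']
    rw [dd_congr hB ih hx]
    rw [dd_sum (Finset.range (m+1)) (fun k => Q (m-k) k g) _
      (fun k _ => (an_Q hg (m-k) k x hx).differentiableAt)]
    have hterm : ∀ k ∈ Finset.range (m+1),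
        ((m.choose k : ℂ) * (Real.cos θ : ℂ)^(m-k) * (Real.sin θ : ℂ)^k)
            * dd (Real.cos θ, Real.sin θ) (Q (m-k) k g) x
        = ((m.choose k : ℂ) * (Real.cos θ : ℂ)^(m+1-k) * (Real.sin θ : ℂ)^k) * Q (m+1-k) k g x
          + ((m.choose k : ℂ) * (Real.cos θ : ℂ)^(m-k) * (Real.sin θ : ℂ)^(k+1)) * Q (m-k) (k+1) g x := by
      intro k hk
      rw [Finset.mem_range] at hk
      rw [dd_line, dd1_Q, dd2_Q hB hg _ _ hx]
      have h1 : m + 1 - k = (m - k) + 1 := by omega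
      rw [h1, pow_succ]
      ring
    rw [Finset.sum_congr rfl hterm, Finset.sum_add_distrib]
    set c : ℂ := (Real.cos θ : ℂ)
    set s : ℂ := (Real.sin θ : ℂ)
    set T : ℕ → ℂ := fun k => Q (m+1-k) k g x with hT
    have e2T : ∀ k, k ≤ m → Q (m-k) (k+1) g x = T (k+1) := by
      intro k hk
      simp only [hT]
      rw [show m + 1 - (k+1) = m - k from by omega]
    have hS1 : ∑ k ∈ Finset.range (m+1), ((m.choose k : ℂ) * c^(m+1-k) * s^k) * Q (m+1-k) k g x
        = (∑ i ∈ Finset.range (m+1), ((m.choose (i+1) : ℂ) * c^(m-i) * s^(i+1)) * T (i+1))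
          + c^(m+1) * T 0 := by
      rw [Finset.sum_range_succ' (fun k => ((m.choose k : ℂ) * c^(m+1-k) * s^k) * T k) m]
      simp only [Nat.choose_zero_right, Nat.cast_one, pow_zero, mul_one, one_mul, Nat.sub_zero]
      rw [Finset.sum_range_succ]
      have : ((m.choose (m+1) : ℂ) * c^(m-m) * s^(m+1)) * T (m+1) = 0 := by
        simp [Nat.choose_succ_self]
      rw [this, add_zero]
      congr 1
      refine Finset.sum_congr rfl fun i hi => ?_
      rw [Finset.mem_range] at hi
      have : m + 1 - (i+1) = m - i := by omega
      rw [this]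
    have hS2 : ∑ k ∈ Finset.range (m+1), ((m.choose k : ℂ) * c^(m-k) * s^(k+1)) * Q (m-k) (k+1) g x
        = ∑ i ∈ Finset.range (m+1), ((m.choose i : ℂ) * c^(m-i) * s^(i+1)) * T (i+1) := by
      refine Finset.sum_congr rfl fun i hi => ?_
      rw [Finset.mem_range] at hi
      rw [e2T i (Nat.lt_succ_iff.mp hi)]
    rw [hS1, hS2]
    rw [Finset.sum_range_succ' (fun k => (((m+1).choose k : ℂ) * c^(m+1-k) * s^k) * T k) (m+1)]
    simp only [Nat.choose_zero_right, Nat.cast_one, pow_zero, mul_one, one_mul, Nat.sub_zero]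
    rw [add_comm ((∑ i ∈ Finset.range (m+1), ((m.choose (i+1):ℂ) * c^(m-i) * s^(i+1)) * T (i+1)))
        (c^(m+1) * T 0), add_assoc, ← Finset.sum_add_distrib]
    rw [add_comm (c ^ (m + 1) * T 0)]
    congr 1
    refine Finset.sum_congr rfl fun i hi => ?_
    rw [Finset.mem_range] at hi
    have hch : ((m+1).choose (i+1) : ℂ) = (m.choose (i+1) : ℂ) + (m.choose i : ℂ) := by
      rw [Nat.choose_succ_succ]; push_cast; ring
    have hpow : m + 1 - (i+1) = m - i := by omega
    rw [hpow, hch]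
    ring

noncomputable def ddW : (k : ℕ) → (Fin k → ℝ × ℝ) → (ℝ × ℝ → ℂ) → ℝ × ℝ → ℂ
  | 0, _, g => g
  | (k+1), w, g => dd (w 0) (ddW k (Fin.tail w) g)

lemma iterFD_eq_ddW (hB : IsOpen B) :
    ∀ (k : ℕ) (g : ℝ × ℝ → ℂ), AnalyticOnNhd ℝ g B → ∀ (w : Fin k → ℝ × ℝ), ∀ x ∈ B,
      iteratedFDeriv ℝ k g x w = ddW k w g x := by
  intro k
  induction k with
  | zero => intro g hg w x hx; simp [ddW]
  | succ k ih =>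
    intro g hg w x hx
    rw [iteratedFDeriv_succ_apply_left]
    have hdiff : DifferentiableAt ℝ (iteratedFDeriv ℝ k g) x :=
      ((hg.iteratedFDeriv k) x hx).differentiableAt
    set A : ((ℝ × ℝ) [×k]→L[ℝ] ℂ) →L[ℝ] ℂ :=
      ContinuousMultilinearMap.apply ℝ (fun _ : Fin k => ℝ × ℝ) ℂ (Fin.tail w) with hA
    have hcomp : (fun y => iteratedFDeriv ℝ k g y (Fin.tail w)) = A ∘ (iteratedFDeriv ℝ k g) := rfl
    have h1 : fderiv ℝ (iteratedFDeriv ℝ k g) x (w 0) (Fin.tail w)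
        = dd (w 0) (fun y => iteratedFDeriv ℝ k g y (Fin.tail w)) x := by
      show _ = fderiv ℝ _ x (w 0)
      rw [hcomp, fderiv_comp x A.differentiableAt hdiff, A.fderiv]
      rfl
    rw [h1, ddW]
    exact dd_congr hB (fun y hy => ih g hg (Fin.tail w) y hy) hx

lemma ddW_normal (hB : IsOpen B) :
    ∀ (k : ℕ) (w : Fin k → ℝ × ℝ), (∀ s, w s = e1 ∨ w s = e2) →
      ∀ (g : ℝ × ℝ → ℂ), AnalyticOnNhd ℝ g B →
      ∃ i j, i + j = k ∧ ∀ x ∈ B, ddW k w g x = Q i j g x := by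
  intro k
  induction k with
  | zero => intro w _ g _; exact ⟨0, 0, rfl, fun x _ => rfl⟩
  | succ k ih =>
    intro w hw g hg
    obtain ⟨i, j, hij, hval⟩ := ih (Fin.tail w) (fun s => hw s.succ) g hg
    rcases hw 0 with h0 | h0
    · refine ⟨i+1, j, by omega, fun x hx => ?_⟩
      rw [ddW, h0, dd_congr hB hval hx, ← dd1_Q]
    · refine ⟨i, j+1, by omega, fun x hx => ?_⟩
      rw [ddW, h0, dd_congr hB hval hx, ← dd2_Q hB hg _ _ hx]

lemma deriv_comp_line (hg : AnalyticOnNhd ℝ g B) {r : ℝ}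
    (hx : r • e ∈ B) :
    deriv (fun t : ℝ => g (t • e)) r = dd e g (r • e) := by
  have h1 : HasFDerivAt g (fderiv ℝ g (r • e)) (r • e) :=
    ((hg _ hx).differentiableAt).hasFDerivAt
  have h2 : HasDerivAt (fun t : ℝ => t • e) e r := by
    simpa using (hasDerivAt_id r).smul_const e
  exact (h1.comp_hasDerivAt r h2).deriv

lemma deriv_iter_congr {F G : ℝ → ℂ} {r : ℝ} (hFG : F =ᶠ[𝓝 r] G) (m : ℕ) :
    deriv^[m] F r = deriv^[m] G r := by
  induction m generalizing F G r with
  | zero => exact hFG.eq_of_nhds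
  | succ m ih =>
    rw [Function.iterate_succ_apply, Function.iterate_succ_apply]
    exact ih hFG.deriv

lemma deriv_iter_comp_line (hB : IsOpen B) :
    ∀ (m : ℕ) (g : ℝ × ℝ → ℂ), AnalyticOnNhd ℝ g B → ∀ (r : ℝ), r • e ∈ B →
      deriv^[m] (fun t : ℝ => g (t • e)) r = ((dd e)^[m] g) (r • e) := by
  intro m
  induction m with
  | zero => intro g hg r hx; rfl
  | succ m ih =>
    intro g hg r hx
    rw [Function.iterate_succ_apply]
    have hopen : IsOpen {t : ℝ | t • e ∈ B} := hB.preimage (by fun_prop)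
    have hev : (deriv fun t : ℝ => g (t • e)) =ᶠ[𝓝 r] (fun t : ℝ => dd e g (t • e)) := by
      filter_upwards [hopen.mem_nhds hx] with t ht
      exact deriv_comp_line hg ht
    rw [deriv_iter_congr hev m, ih (dd e g) (an_dd hg) r hx]
    rw [← Function.iterate_succ_apply (dd e) m g]

lemma deriv_iter_zero_fun (m : ℕ) : deriv^[m] (fun _ : ℝ => (0:ℂ)) = fun _ => 0 :=
  Function.iterate_fixed (by funext x; simp) m

lemma deriv_iter_zero_of_vanish {F : ℝ → ℂ} {ε : ℝ} (hε : 0 < ε)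
    (hF : AnalyticAt ℝ F 0) (hz : ∀ t ∈ Set.Ioo (0:ℝ) ε, F t = 0) (m : ℕ) :
    deriv^[m] F 0 = 0 := by
  have hfreq : ∃ᶠ t in 𝓝[≠] (0:ℝ), F t = 0 := by
    have hev : ∀ᶠ t in 𝓝[>] (0:ℝ), F t = 0 := by
      filter_upwards [Ioo_mem_nhdsGT_of_mem (Set.left_mem_Ico.mpr hε)] with t ht
      exact hz t ht
    have hle : 𝓝[>] (0:ℝ) ≤ 𝓝[≠] (0:ℝ) :=
      nhdsWithin_mono _ (fun t ht => ne_of_gt ht)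
    exact hev.frequently.filter_mono hle
  rcases hF.eventually_eq_zero_or_eventually_ne_zero with hcase | hcase
  · rw [deriv_iter_congr hcase m, deriv_iter_zero_fun]
  · obtain ⟨t, ht1, ht2⟩ := (hfreq.and_eventually hcase).exists
    exact absurd ht1 ht2

lemma key_sum (θ : ℝ) (m : ℕ) :
    ∑ k ∈ Finset.range (m+1),
        ((m.choose k : ℂ) * (Real.cos θ : ℂ)^(m-k) * (Real.sin θ : ℂ)^k)
          * ((-(Real.sin θ : ℂ)) * ((Complex.I^k).re : ℂ) + (Real.cos θ : ℂ) * ((Complex.I^(k+1)).re : ℂ))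
      = -(Real.sin ((m+1) * θ) : ℂ) := by
  set c : ℝ := Real.cos θ
  set s : ℝ := Real.sin θ
  have hterm : ∀ k ∈ Finset.range (m+1),
      ((m.choose k : ℂ) * (c : ℂ)^(m-k) * (s : ℂ)^k)
          * ((-(s:ℂ)) * ((Complex.I^k).re : ℂ) + (c:ℂ) * ((Complex.I^(k+1)).re : ℂ))
      = ((((m.choose k : ℝ) * c^(m-k) * s^k) : ℝ) : ℂ)
          * ((((Complex.I^k * (Complex.I * ((c:ℂ) + (s:ℂ) * Complex.I))).re : ℝ)) : ℂ) := by
    intro k _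
    have h1 : (Complex.I^k * (Complex.I * ((c:ℂ) + (s:ℂ) * Complex.I))).re
        = -s * (Complex.I^k).re + c * (Complex.I^(k+1)).re := by
      have h2 : Complex.I * ((c:ℂ) + (s:ℂ) * Complex.I) = ((-s:ℝ):ℂ) + (c:ℝ) * Complex.I := by
        push_cast; ring_nf; rw [Complex.I_sq]; ring
      rw [h2]
      simp [Complex.mul_re, Complex.add_re, Complex.mul_im, pow_succ]
      ring
    rw [h1]; push_cast; ring
  rw [Finset.sum_congr rfl hterm]
  have hsum : ∑ k ∈ Finset.range (m+1),
      ((((m.choose k : ℝ) * c^(m-k) * s^k) : ℝ) : ℂ)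
        * ((((Complex.I^k * (Complex.I * ((c:ℂ) + (s:ℂ) * Complex.I))).re : ℝ)) : ℂ)
      = (((∑ k ∈ Finset.range (m+1),
          ((m.choose k : ℂ) * (c:ℂ)^(m-k) * ((s:ℂ) * Complex.I)^k)
            * (Complex.I * ((c:ℂ) + (s:ℂ) * Complex.I))).re : ℝ) : ℂ) := by
    rw [Complex.re_sum]
    push_cast
    refine Finset.sum_congr rfl fun k _ => ?_
    have : ((m.choose k : ℂ) * (c:ℂ)^(m-k) * ((s:ℂ) * Complex.I)^k)
            * (Complex.I * ((c:ℂ) + (s:ℂ) * Complex.I))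
        = (((m.choose k : ℝ) * c^(m-k) * s^k : ℝ) : ℂ)
            * (Complex.I^k * (Complex.I * ((c:ℂ) + (s:ℂ) * Complex.I))) := by
      push_cast; ring
    rw [this, Complex.re_ofReal_mul]
    push_cast; ring
  rw [hsum]
  have hbinom : ∑ k ∈ Finset.range (m+1),
      ((m.choose k : ℂ) * (c:ℂ)^(m-k) * ((s:ℂ) * Complex.I)^k)
      = ((s:ℂ) * Complex.I + (c:ℂ))^m := by
    rw [add_pow]
    refine Finset.sum_congr rfl fun k hk => ?_
    rw [Finset.mem_range, Nat.lt_succ_iff] at hk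
    ring
  have hX : (∑ k ∈ Finset.range (m+1),
        ((m.choose k : ℂ) * (c:ℂ)^(m-k) * ((s:ℂ) * Complex.I)^k)
          * (Complex.I * ((c:ℂ) + (s:ℂ) * Complex.I)))
      = Complex.I * Complex.exp ((((m+1) * θ : ℝ) : ℂ) * Complex.I) := by
    rw [← Finset.sum_mul, hbinom]
    have hz : (c:ℂ) + (s:ℂ) * Complex.I = Complex.exp ((θ:ℂ) * Complex.I) := by
      rw [Complex.exp_mul_I]
      simp [c, s, Complex.ofReal_cos, Complex.ofReal_sin]
    have h1 : ((s:ℂ) * Complex.I + (c:ℂ))^m * (Complex.I * ((c:ℂ) + (s:ℂ) * Complex.I))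
        = Complex.I * ((c:ℂ) + (s:ℂ) * Complex.I)^(m+1) := by
      rw [pow_succ]; ring
    rw [h1, hz, ← Complex.exp_nat_mul]
    congr 2
    push_cast; ring
  rw [hX, Complex.exp_mul_I]
  have h2 : ∀ w : ℝ, (Complex.I * (Complex.cos (w:ℂ) + Complex.sin (w:ℂ) * Complex.I)).re
      = -Real.sin w := by
    intro w
    simp [Complex.mul_re, Complex.sin_ofReal_re, Complex.cos_ofReal_im,
      Complex.sin_ofReal_im, Complex.cos_ofReal_re]
  rw [h2 ((m+1) * θ)]
  push_cast
  ring

lemma nat_two_step {P : ℕ → Prop} (h0 : P 0) (h1 : P 1) (hstep : ∀ k, P k → P (k+2)) :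
    ∀ k, P k := by
  have key : ∀ k, P k ∧ P (k+1) := by
    intro k
    induction k with
    | zero => exact ⟨h0, h1⟩
    | succ k ih => exact ⟨ih.2, hstep k ih.1⟩
  exact fun k => (key k).1

lemma fin2_cases (t : Fin 2) : t = 0 ∨ t = 1 := by fin_cases t <;> simp

-- derived helpers used in main proof
lemma Q_congr {B : Set (ℝ × ℝ)} {f g : ℝ × ℝ → ℂ} (hB : IsOpen B)
    (hfg : ∀ y ∈ B, f y = g y) (i j : ℕ) : ∀ x ∈ B, Q i j f x = Q i j g x := by
  intro x hx
  exact dd_iter_congr hB (fun y hy => dd_iter_congr hB hfg j y hy) i x hx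

lemma Q_zero (i j : ℕ) : Q i j (fun _ => (0:ℂ)) = fun _ => (0:ℂ) := by
  rw [Q, dd_iter_zero, dd_iter_zero]

lemma Q_lin2 {B : Set (ℝ × ℝ)} {f g : ℝ × ℝ → ℂ} (hB : IsOpen B)
    (hf : AnalyticOnNhd ℝ f B) (hg : AnalyticOnNhd ℝ g B) (a b : ℂ) (i j : ℕ) :
    ∀ x ∈ B, Q i j (fun y => a * f y + b * g y) x = a * Q i j f x + b * Q i j g x := by
  intro x hx
  rw [Q, dd_iter_congr hB (dd_iter_lin hB hf hg a b j) i x hx]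
  exact dd_iter_lin hB (an_Q hf 0 j) (an_Q hg 0 j) a b i x hx

lemma Q_lin3 {B : Set (ℝ × ℝ)} {f g f3 : ℝ × ℝ → ℂ} (hB : IsOpen B)
    (hf : AnalyticOnNhd ℝ f B) (hg : AnalyticOnNhd ℝ g B) (hf3 : AnalyticOnNhd ℝ f3 B)
    (a b c3 : ℂ) (i j : ℕ) :
    ∀ x ∈ B, Q i j (fun y => a * f y + b * g y + c3 * f3 y) x
      = a * Q i j f x + b * Q i j g x + c3 * Q i j f3 x := by
  intro x hx
  rw [Q, dd_iter_congr hB (dd_iter_lin3 hB hf hg hf3 a b c3 j) i x hx]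
  exact dd_iter_lin3 hB (an_Q hf 0 j) (an_Q hg 0 j) (an_Q hf3 0 j) a b c3 i x hx

end Stmt7Aux

open Stmt7Aux

/-- A singular line `Γ_h^+` and a generalized singular line `Γ_h^−` (constant parameter
`C₁ ≠ 0`) intersecting at the origin at angle `θ₀ = απ`, with `u 0 = 0` and the
rational-angle avoidance condition: the eigenfunction vanishes at `0` up to order `n`. -/
theorem stmt7
    (Ω : Set (ℝ × ℝ)) (hΩ : IsOpen Ω)
    (lam : ℝ) (hlam : 0 < lam)
    (u : ℝ × ℝ → ℂ)
    (hu_an : AnalyticOnNhd ℝ u Ω)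
    (hu_eq : ∀ x ∈ Ω, pd1 (pd1 u) x + pd2 (pd2 u) x + (lam : ℂ) * u x = 0)
    (α : ℝ) (hα : α ∈ Set.Ioo (0 : ℝ) 1)
    (θ₀ : ℝ) (hθ₀ : θ₀ = α * Real.pi)
    (h : ℝ) (hh : 0 < h)
    (hdisk : ∀ x : ℝ × ℝ, x.1 ^ 2 + x.2 ^ 2 ≤ h ^ 2 → x ∈ Ω)
    (n : ℕ) (hn : 3 ≤ n)
    (C₁ : ℂ) (hC₁ : C₁ ≠ 0)
    (hbc₁ : ∀ r : ℝ, 0 ≤ r → r ≤ h →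
      fderiv ℝ u (r, 0) (0, -1) + C₁ * u (r, 0) = 0)
    (hsing_p : ∀ r : ℝ, 0 ≤ r → r ≤ h →
      fderiv ℝ u (r * Real.cos θ₀, r * Real.sin θ₀) (-Real.sin θ₀, Real.cos θ₀) = 0)
    (hu0 : u (0, 0) = 0)
    (hαpq : ∀ p q : ℕ, 1 ≤ p → p ≤ n - 1 → 1 ≤ q → q ≤ p - 1 → α ≠ (q : ℝ) / (p : ℝ)) :
    ∀ k : ℕ, k < n → iteratedFDeriv ℝ k u (0, 0) = 0 := by
  obtain ⟨hα0, hα1⟩ := hα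
  have hh2 : 0 < h/2 := by linarith
  set B : Set (ℝ × ℝ) := Metric.ball (0 : ℝ × ℝ) (h/2) with hBdef
  have hBopen : IsOpen B := Metric.isOpen_ball
  have hBsub : B ⊆ Ω := by
    intro x hx
    apply hdisk
    have hx' : ‖x‖ < h/2 := by simpa [hBdef, mem_ball_zero_iff] using hx
    have h1 : ‖x.1‖ ≤ ‖x‖ := norm_fst_le x
    have h2 : ‖x.2‖ ≤ ‖x‖ := norm_snd_le x
    rw [Real.norm_eq_abs] at h1 h2
    have e1' : x.1^2 ≤ (h/2)^2 := by nlinarith [abs_nonneg x.1, sq_abs x.1, norm_nonneg x]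
    have e2' : x.2^2 ≤ (h/2)^2 := by nlinarith [abs_nonneg x.2, sq_abs x.2, norm_nonneg x]
    nlinarith
  have h0B : (0 : ℝ × ℝ) ∈ B := Metric.mem_ball_self hh2
  have huB : AnalyticOnNhd ℝ u B := hu_an.mono hBsub
  -- membership of points on the two rays
  have hmem : ∀ e : ℝ × ℝ, ‖e‖ ≤ 1 → ∀ t : ℝ, |t| < h/2 → t • e ∈ B := by
    intro e he t ht
    rw [hBdef, mem_ball_zero_iff, norm_smul, Real.norm_eq_abs]
    calc |t| * ‖e‖ ≤ |t| * 1 := by nlinarith [abs_nonneg t]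
    _ < h/2 := by linarith
  have hne1 : ‖e1‖ ≤ 1 := by
    rw [show e1 = ((1:ℝ),(0:ℝ)) from rfl, Prod.norm_def]
    simp
  have hnep : ‖((Real.cos θ₀, Real.sin θ₀) : ℝ × ℝ)‖ ≤ 1 := by
    rw [Prod.norm_def]
    simp only [Real.norm_eq_abs]
    exact max_le (Real.abs_cos_le_one θ₀) (Real.abs_sin_le_one θ₀)
  -- the coefficients
  set cA : ℕ → ℕ → ℂ := fun i j => Q i j u (0 : ℝ × ℝ) with hcA
  -- PDE relations
  have hPDE : ∀ i j : ℕ, cA (i+2) j + cA i (j+2) + (lam:ℂ) * cA i j = 0 := by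
    intro i j
    have hW : ∀ y ∈ B, (fun x => (1:ℂ) * (dd e1 (dd e1 u)) x + (1:ℂ) * (dd e2 (dd e2 u)) x
        + (lam:ℂ) * u x) y = (fun _ => (0:ℂ)) y := by
      intro y hy
      have := hu_eq y (hBsub hy)
      simp only [one_mul]; exact this
    have h0 : Q i j (fun x => (1:ℂ) * (dd e1 (dd e1 u)) x + (1:ℂ) * (dd e2 (dd e2 u)) x
        + (lam:ℂ) * u x) (0:ℝ×ℝ) = 0 := by
      rw [Q_congr hBopen hW i j _ h0B, Q_zero]
    rw [Q_lin3 hBopen (an_dd (an_dd huB)) (an_dd (an_dd huB)) huB 1 1 (lam:ℂ) i j _ h0B] at h0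
    rw [Q_dd1 hBopen (an_dd huB) i j _ h0B, Q_dd1 hBopen huB (i+1) j _ h0B] at h0
    rw [Q_dd2 i j (dd e2 u), Q_dd2 i (j+1) u] at h0
    have hi2 : i + 1 + 1 = i + 2 := by omega
    have hj2 : j + 1 + 1 = j + 2 := by omega
    rw [hi2, hj2] at h0
    simpa [hcA] using h0
  -- the generalized singular line Γ⁻
  have hminus : ∀ m : ℕ, cA m 1 = C₁ * cA m 0 := by
    intro m
    set G : ℝ × ℝ → ℂ := fun x => (-1:ℂ) * dd e2 u x + C₁ * u x with hG
    have hGan : AnalyticOnNhd ℝ G B :=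
      (analyticOnNhd_const.mul (an_dd huB)).add (analyticOnNhd_const.mul huB)
    have hGline : ∀ t ∈ Set.Ioo (0:ℝ) (h/4), G (t • e1) = 0 := by
      intro t ht
      have h1 : t • e1 = ((t:ℝ), (0:ℝ)) := by simp [e1, Prod.ext_iff]
      have h2 := hbc₁ t (le_of_lt ht.1) (by cases ht; linarith)
      have h4 : fderiv ℝ u (t, (0:ℝ)) (0, -1) = - fderiv ℝ u (t,(0:ℝ)) (0,1) := by
        rw [show ((0:ℝ), (-1:ℝ)) = -((0:ℝ),(1:ℝ)) from by simp [Prod.ext_iff], map_neg]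
      rw [h4] at h2
      rw [h1]
      show (-1:ℂ) * dd e2 u ((t:ℝ), (0:ℝ)) + C₁ * u (t, 0) = 0
      have h5 : dd e2 u ((t:ℝ),(0:ℝ)) = fderiv ℝ u ((t:ℝ),(0:ℝ)) ((0:ℝ),(1:ℝ)) := rfl
      rw [h5]
      linear_combination h2
    have hlin : AnalyticAt ℝ (fun t : ℝ => t • e1) 0 := by
      have := ((ContinuousLinearMap.id ℝ ℝ).smulRight e1).analyticAt (0:ℝ)
      exact this
    have hFan : AnalyticAt ℝ (fun t : ℝ => G (t • e1)) 0 := by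
      exact AnalyticAt.comp (g := G) (f := fun t : ℝ => t • e1) (x := (0:ℝ))
        (by simpa using hGan _ h0B) hlin
    have hvan : ∀ m', deriv^[m'] (fun t : ℝ => G (t • e1)) 0 = 0 :=
      deriv_iter_zero_of_vanish (by linarith) hFan hGline
    have hmem0 : (0:ℝ) • e1 ∈ B := by rw [zero_smul]; exact h0B
    have hline := deriv_iter_comp_line hBopen m G hGan 0 hmem0
    have hkey : (dd e1)^[m] G (0:ℝ×ℝ) = 0 := by
      rw [show (0:ℝ×ℝ) = (0:ℝ) • e1 from (zero_smul ℝ e1).symm, ← hline]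
      exact hvan m
    rw [hG] at hkey
    rw [dd_iter_lin hBopen (an_dd huB) huB (-1) C₁ m _ h0B] at hkey
    have hq1 : (dd e1)^[m] (dd e2 u) (0:ℝ×ℝ) = cA m 1 := by
      rw [hcA]
      show _ = Q m 1 u _
      rw [Q, Function.iterate_one]
    have hq0 : (dd e1)^[m] u (0:ℝ×ℝ) = cA m 0 := rfl
    rw [hq1, hq0] at hkey
    linear_combination -hkey
  -- the singular line Γ⁺
  have hplus : ∀ m : ℕ,
      (dd (Real.cos θ₀, Real.sin θ₀))^[m] (dd (-Real.sin θ₀, Real.cos θ₀) u) (0:ℝ×ℝ) = 0 := by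
    intro m
    set ep : ℝ × ℝ := (Real.cos θ₀, Real.sin θ₀) with hep
    set G : ℝ × ℝ → ℂ := dd (-Real.sin θ₀, Real.cos θ₀) u with hG
    have hGan : AnalyticOnNhd ℝ G B := an_dd huB
    have hGline : ∀ t ∈ Set.Ioo (0:ℝ) (h/4), G (t • ep) = 0 := by
      intro t ht
      have h1 : t • ep = ((t * Real.cos θ₀ : ℝ), (t * Real.sin θ₀ : ℝ)) := by
        simp [hep, Prod.ext_iff]
      rw [h1, hG]
      exact hsing_p t (le_of_lt ht.1) (by cases ht; linarith)
    have hlin : AnalyticAt ℝ (fun t : ℝ => t • ep) 0 := by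
      have := ((ContinuousLinearMap.id ℝ ℝ).smulRight ep).analyticAt (0:ℝ)
      exact this
    have hFan : AnalyticAt ℝ (fun t : ℝ => G (t • ep)) 0 := by
      exact AnalyticAt.comp (g := G) (f := fun t : ℝ => t • ep) (x := (0:ℝ))
        (by simpa using hGan _ h0B) hlin
    have hvan : ∀ m', deriv^[m'] (fun t : ℝ => G (t • ep)) 0 = 0 :=
      deriv_iter_zero_of_vanish (by linarith) hFan hGline
    have hmem0 : (0:ℝ) • ep ∈ B := by rw [zero_smul]; exact h0B
    have hline := deriv_iter_comp_line hBopen m G hGan 0 hmem0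
    rw [show (0:ℝ×ℝ) = (0:ℝ) • ep from (zero_smul ℝ ep).symm, ← hline]
    exact hvan m
  -- expansion of the Γ⁺ condition
  have hexp : ∀ m : ℕ, ∑ k ∈ Finset.range (m+1),
      ((m.choose k : ℂ) * (Real.cos θ₀ : ℂ)^(m-k) * (Real.sin θ₀ : ℂ)^k)
        * ((-(Real.sin θ₀ : ℂ)) * cA (m-k+1) k + (Real.cos θ₀ : ℂ) * cA (m-k) (k+1)) = 0 := by
    intro m
    have h1 := dd_iter_binom hBopen (an_dd huB (v := (-Real.sin θ₀, Real.cos θ₀))) θ₀ m _ h0B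
    rw [hplus m] at h1
    have hterm : ∀ k ∈ Finset.range (m+1), Q (m-k) k (dd (-Real.sin θ₀, Real.cos θ₀) u) (0:ℝ×ℝ)
        = (-(Real.sin θ₀ : ℂ)) * cA (m-k+1) k + (Real.cos θ₀ : ℂ) * cA (m-k) (k+1) := by
      intro k _
      have hfun : ∀ y ∈ B, dd (-Real.sin θ₀, Real.cos θ₀) u y
          = (fun y => ((-Real.sin θ₀ : ℝ) : ℂ) * dd e1 u y + ((Real.cos θ₀ : ℝ) : ℂ) * dd e2 u y) y := by
        intro y _
        rw [show ((-Real.sin θ₀, Real.cos θ₀) : ℝ × ℝ)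
            = (-Real.sin θ₀) • e1 + (Real.cos θ₀) • e2 from by simp [e1, e2, Prod.ext_iff],
          dd_dir]
      rw [Q_congr hBopen hfun (m-k) k _ h0B,
        Q_lin2 hBopen (an_dd huB) (an_dd huB) _ _ (m-k) k _ h0B,
        Q_dd1 hBopen huB (m-k) k _ h0B, Q_dd2 (m-k) k u]
      push_cast
      rfl
    rw [Finset.sum_congr rfl (fun k hk => by rw [hterm k hk])] at h1
    exact h1.symm
  -- nonvanishing of sin (N θ₀)
  have hsin_ne : ∀ N : ℕ, 1 ≤ N → N ≤ n - 1 → Real.sin ((N:ℝ) * θ₀) ≠ 0 := by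
    intro N h1 h2 hs
    have hπ := Real.pi_pos
    rw [hθ₀, show (N:ℝ) * (α * Real.pi) = ((N:ℝ) * α) * Real.pi from by ring,
      Real.sin_eq_zero_iff] at hs
    obtain ⟨q, hq⟩ := hs
    have hq' : (q:ℝ) = (N:ℝ) * α := mul_right_cancel₀ (ne_of_gt hπ) hq
    have hN0 : (0:ℝ) < N := by exact_mod_cast h1
    have hql : (0:ℝ) < (q:ℝ) := by rw [hq']; positivity
    have hqu : (q:ℝ) < (N:ℝ) := by rw [hq']; nlinarith
    have hq1 : 1 ≤ q := by exact_mod_cast hql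
    have hqN : q < (N:ℤ) := by exact_mod_cast hqu
    refine hαpq N q.toNat h1 h2 (by omega) (by omega) ?_
    have hcast : ((q.toNat : ℕ) : ℝ) = (q:ℝ) := by
      have h7 : (q.toNat : ℤ) = q := Int.toNat_of_nonneg (by omega)
      exact_mod_cast congrArg (fun z : ℤ => (z:ℝ)) h7
    rw [hcast, hq', mul_comm, mul_div_assoc, div_self (ne_of_gt hN0), mul_one]
  -- main strong induction
  have main : ∀ N, N < n → ∀ i j, i + j = N → cA i j = 0 := by
    intro N
    induction N using Nat.strong_induction_on with
    | _ N ih =>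
      intro hN i j hij
      rcases Nat.eq_zero_or_pos N with hN0 | hNpos
      · obtain ⟨rfl, rfl⟩ : i = 0 ∧ j = 0 := by omega
        exact hu0
      obtain ⟨m, rfl⟩ : ∃ m, N = m + 1 := ⟨N-1, by omega⟩
      have hb : cA m 1 = 0 := by
        rw [hminus m, ih m (by omega) (by omega) m 0 (by omega), mul_zero]
      have hstruct : ∀ k, k ≤ m+1 → cA (m+1-k) k = ((Complex.I^k).re : ℂ) * cA (m+1) 0 := by
        refine nat_two_step ?_ ?_ ?_
        · intro _; simp
        · intro _
          simpa using hb
        · intro k hk hk2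
          have h1 := hk (by omega)
          have h2 : cA (m+1-(k+2)) k = 0 :=
            ih (m-1) (by omega) (by omega) (m+1-(k+2)) k (by omega)
          have h3 := hPDE (m+1-(k+2)) k
          rw [show m+1-(k+2)+2 = m+1-k from by omega, h2, mul_zero, add_zero, h1] at h3
          have h5 : ((Complex.I^(k+2)).re : ℂ) = -((Complex.I^k).re : ℂ) := by
            rw [show Complex.I^(k+2) = Complex.I^k * (Complex.I * Complex.I) from by ring,
              Complex.I_mul_I]
            push_cast
            simp
          rw [h5]
          linear_combination h3
      have hcond := hexp m
      have hrw : ∀ k ∈ Finset.range (m+1),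
          ((m.choose k : ℂ) * (Real.cos θ₀ : ℂ)^(m-k) * (Real.sin θ₀ : ℂ)^k)
            * ((-(Real.sin θ₀ : ℂ)) * cA (m-k+1) k + (Real.cos θ₀ : ℂ) * cA (m-k) (k+1))
          = (((m.choose k : ℂ) * (Real.cos θ₀ : ℂ)^(m-k) * (Real.sin θ₀ : ℂ)^k)
            * ((-(Real.sin θ₀ : ℂ)) * ((Complex.I^k).re : ℂ)
              + (Real.cos θ₀ : ℂ) * ((Complex.I^(k+1)).re : ℂ))) * cA (m+1) 0 := by
        intro k hk
        rw [Finset.mem_range, Nat.lt_succ_iff] at hk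
        rw [show m-k+1 = m+1-k from by omega, hstruct k (by omega),
          show m-k = m+1-(k+1) from by omega, hstruct (k+1) (by omega)]
        ring
      rw [Finset.sum_congr rfl hrw, ← Finset.sum_mul, key_sum θ₀ m] at hcond
      have hsinm : Real.sin (((m+1 : ℕ) : ℝ) * θ₀) ≠ 0 := hsin_ne (m+1) (by omega) (by omega)
      have ha0 : cA (m+1) 0 = 0 := by
        rcases mul_eq_zero.mp hcond with hcc | hcc
        · exfalso
          apply hsinm
          have : ((Real.sin ((m+1) * θ₀) : ℝ) : ℂ) = 0 := by linear_combination -hcc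
          push_cast at this ⊢
          exact_mod_cast this
        · exact hcc
      rw [show i = m+1-j from by omega, hstruct j (by omega), ha0, mul_zero]
  -- conclusion: convert to iteratedFDeriv
  intro k hk
  have hc := main k hk
  have hmap : ∀ w : Fin k → ℝ × ℝ, (∀ s, w s = e1 ∨ w s = e2) →
      iteratedFDeriv ℝ k u (0:ℝ×ℝ) w = 0 := by
    intro w hw
    obtain ⟨i, j, hij, hval⟩ := ddW_normal hBopen k w hw u huB
    rw [iterFD_eq_ddW hBopen k u huB w _ h0B, hval _ h0B]
    exact hc i j hij
  have hext : (iteratedFDeriv ℝ k u (0:ℝ×ℝ)).toMultilinearMap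
      = (0 : ContinuousMultilinearMap ℝ (fun _ : Fin k => ℝ×ℝ) ℂ).toMultilinearMap := by
    apply Module.Basis.ext_multilinear (fun _ => Module.Basis.finTwoProd ℝ)
    intro v
    have hw : ∀ s, (Module.Basis.finTwoProd ℝ) (v s) = e1 ∨ (Module.Basis.finTwoProd ℝ) (v s) = e2 := by
      intro s
      rcases fin2_cases (v s) with hvs | hvs <;> rw [hvs]
      · left; rw [Module.Basis.finTwoProd_zero]; rfl
      · right; rw [Module.Basis.finTwoProd_one]; rfl
    have := hmap (fun s => (Module.Basis.finTwoProd ℝ) (v s)) hw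
    simpa using this
  have hfin : iteratedFDeriv ℝ k u (0:ℝ×ℝ) = 0 := by
    ext w
    exact MultilinearMap.congr_fun hext w
  exact hfin
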